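/- arXiv:1311.5690 — 9 statements merged into one kernel-verified Lean document; each statement's English description precedes it below -/
import Mathlib

section
/- Define a relation R on positive integers by: R(x, 3x+1) for all x; R(x, x/2) whenever x is even; R(x, 2x) for all x; and R(x, (x-1)/3) whenever x ≡ 1 (mod 3) and x > 1. Then for every positive integer k, the numbers 9k+3 and 9k+4 are connected by a finite chain of R-steps (i.e., 9k+4 is reachable from 9k+3 under the reflexive-transitive closure of R). -/
/-- One allowed move of model M1 on positive integers. -/
def M1Step (x y : ℕ) : Prop :=
  0 < x ∧ (y = 3 * x + 1 ∨ y = 2 * x ∨ (x % 2 = 0 ∧ y = x / 2) ∨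
    (x % 3 = 1 ∧ 1 < x ∧ y = (x - 1) / 3))

theorem reach_9k3_to_9k4 (k : ℕ) (hk : 0 < k) :
    Relation.ReflTransGen M1Step (9 * k + 3) (9 * k + 4) := by
  have s1 : M1Step (9 * k + 3) (27 * k + 10) := ⟨by omega, Or.inl (by ring)⟩
  have s2 : M1Step (27 * k + 10) (54 * k + 20) := ⟨by omega, Or.inr (Or.inl (by ring))⟩
  have s3 : M1Step (54 * k + 20) (108 * k + 40) := ⟨by omega, Or.inr (Or.inl (by ring))⟩
  have s4 : M1Step (108 * k + 40) (36 * k + 13) :=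
    ⟨by omega, Or.inr (Or.inr (Or.inr ⟨by omega, by omega, by omega⟩))⟩
  have s5 : M1Step (36 * k + 13) (12 * k + 4) :=
    ⟨by omega, Or.inr (Or.inr (Or.inr ⟨by omega, by omega, by omega⟩))⟩
  have s6 : M1Step (12 * k + 4) (6 * k + 2) :=
    ⟨by omega, Or.inr (Or.inr (Or.inl ⟨by omega, by omega⟩))⟩
  have s7 : M1Step (6 * k + 2) (3 * k + 1) :=
    ⟨by omega, Or.inr (Or.inr (Or.inl ⟨by omega, by omega⟩))⟩
  have s8 : M1Step (3 * k + 1) (9 * k + 4) := ⟨by omega, Or.inl (by ring)⟩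
  exact .head s1 (.head s2 (.head s3 (.head s4 (.head s5 (.head s6 (.head s7 (.single s8)))))))
end

section
/- In the model M1 (moves x ↦ 3x+1; x ↦ 2x; x ↦ x/2 if 2 ∣ x; x ↦ (x-1)/3 if x ≡ 1 mod 3 with result a positive integer), for every positive integer k the number 9k+4 is reachable from 9k+2 by a finite sequence of moves, namely via the sequence D, F, F, B, T, T. -/
theorem reach_9k2_to_9k4_via_DFFBTT (k : ℕ) (hk : 0 < k) :
    M1Step (9 * k + 2) (18 * k + 4) ∧ M1Step (18 * k + 4) (6 * k + 1) ∧
    M1Step (6 * k + 1) (2 * k) ∧ M1Step (2 * k) k ∧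
    M1Step k (3 * k + 1) ∧ M1Step (3 * k + 1) (9 * k + 4) := by
  refine ⟨⟨by omega, .inr (.inl (by ring))⟩,
    ⟨by omega, .inr (.inr (.inr ⟨by omega, by omega, by omega⟩))⟩,
    ⟨by omega, .inr (.inr (.inr ⟨by omega, by omega, by omega⟩))⟩,
    ⟨by omega, .inr (.inr (.inl ⟨by omega, by omega⟩))⟩,
    ⟨by omega, .inl rfl⟩,
    ⟨by omega, .inl (by ring)⟩⟩
end

section
/- In the model M1 (moves x ↦ 3x+1; x ↦ 2x; x ↦ x/2 if 2 ∣ x; x ↦ (x-1)/3 if x ≡ 1 mod 3 with positive result), for every positive integer k the number 9k+4 is reachable from 9k+1 via the move sequence D, D, F, F, B, B, T, T, with all intermediate values being positive integers and all side conditions satisfied. -/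
theorem reach_9k1_to_9k4_via_DDFFBBTT (k : ℕ) (hk : 0 < k) :
    M1Step (9 * k + 1) (18 * k + 2) ∧ M1Step (18 * k + 2) (36 * k + 4) ∧
    M1Step (36 * k + 4) (12 * k + 1) ∧ M1Step (12 * k + 1) (4 * k) ∧
    M1Step (4 * k) (2 * k) ∧ M1Step (2 * k) k ∧
    M1Step k (3 * k + 1) ∧ M1Step (3 * k + 1) (9 * k + 4) := by
  refine ⟨⟨by omega, .inr (.inl (by ring))⟩,
    ⟨by omega, .inr (.inl (by ring))⟩,
    ⟨by omega, .inr (.inr (.inr ⟨by omega, by omega, by omega⟩))⟩,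
    ⟨by omega, .inr (.inr (.inr ⟨by omega, by omega, by omega⟩))⟩,
    ⟨by omega, .inr (.inr (.inl ⟨by omega, by omega⟩))⟩,
    ⟨by omega, .inr (.inr (.inl ⟨by omega, by omega⟩))⟩,
    ⟨hk, .inl rfl⟩, ⟨by omega, .inl (by ring)⟩⟩
end

section
/- In the model M1 (moves x ↦ 3x+1; x ↦ 2x; x ↦ x/2 if 2 ∣ x; x ↦ (x-1)/3 if x ≡ 1 mod 3 with positive result), for every positive integer k the number 9k+4 is reachable from 9k via the move sequence T, D, D, F, D, D, F, F, B, B, B, B, T, T. -/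
theorem reach_9k_to_9k4 (k : ℕ) (hk : 0 < k) :
    M1Step (9 * k) (27 * k + 1) ∧ M1Step (27 * k + 1) (54 * k + 2) ∧
    M1Step (54 * k + 2) (108 * k + 4) ∧ M1Step (108 * k + 4) (36 * k + 1) ∧
    M1Step (36 * k + 1) (72 * k + 2) ∧ M1Step (72 * k + 2) (144 * k + 4) ∧
    M1Step (144 * k + 4) (48 * k + 1) ∧ M1Step (48 * k + 1) (16 * k) ∧
    M1Step (16 * k) (8 * k) ∧ M1Step (8 * k) (4 * k) ∧
    M1Step (4 * k) (2 * k) ∧ M1Step (2 * k) k ∧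
    M1Step k (3 * k + 1) ∧ M1Step (3 * k + 1) (9 * k + 4) := by
  refine ⟨?_,?_,?_,?_,?_,?_,?_,?_,?_,?_,?_,?_,⟨hk, Or.inl rfl⟩,?_⟩ <;>
    · simp only [M1Step]; omega
end

section
/- In the model M1 (moves x ↦ 3x+1; x ↦ 2x; x ↦ x/2 if 2 ∣ x; x ↦ (x-1)/3 if x ≡ 1 mod 3 with positive result), for every positive integer k the number 9k+7 is reachable from 9k+5 via the move sequence D, D, D, F, F, B, B, T, B, T. -/
theorem reach_9k5_to_9k7 (k : ℕ) (hk : 0 < k) :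
    M1Step (9 * k + 5) (18 * k + 10) ∧ M1Step (18 * k + 10) (36 * k + 20) ∧
    M1Step (36 * k + 20) (72 * k + 40) ∧ M1Step (72 * k + 40) (24 * k + 13) ∧
    M1Step (24 * k + 13) (8 * k + 4) ∧ M1Step (8 * k + 4) (4 * k + 2) ∧
    M1Step (4 * k + 2) (2 * k + 1) ∧ M1Step (2 * k + 1) (6 * k + 4) ∧
    M1Step (6 * k + 4) (3 * k + 2) ∧ M1Step (3 * k + 2) (9 * k + 7) := by
  refine ⟨⟨by omega, .inr (.inl (by ring))⟩,
    ⟨by omega, .inr (.inl (by ring))⟩,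
    ⟨by omega, .inr (.inl (by ring))⟩,
    ⟨by omega, .inr (.inr (.inr ⟨by omega, by omega, by omega⟩))⟩,
    ⟨by omega, .inr (.inr (.inr ⟨by omega, by omega, by omega⟩))⟩,
    ⟨by omega, .inr (.inr (.inl ⟨by omega, by omega⟩))⟩,
    ⟨by omega, .inr (.inr (.inl ⟨by omega, by omega⟩))⟩,
    ⟨by omega, .inl (by ring)⟩,
    ⟨by omega, .inr (.inr (.inl ⟨by omega, by omega⟩))⟩,
    ⟨by omega, .inl (by ring)⟩⟩
end

section
/- Define the model MS on positive integers with allowed moves: x ↦ 3x+1 if x is odd; x ↦ x/2 if x is even; x ↦ (x-1)/3 if x ≡ 1 (mod 3) and x > 1. Then for every positive integer A with A > 1, there exists a finite sequence of allowed MS-moves transforming A into some positive integer strictly smaller than A. -/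
/-- One allowed move of model MS on positive integers. -/
def MSStep (x y : ℕ) : Prop :=
  0 < x ∧ ((x % 2 = 1 ∧ y = 3 * x + 1) ∨ (x % 2 = 0 ∧ y = x / 2) ∨
    (x % 3 = 1 ∧ 1 < x ∧ y = (x - 1) / 3))

private lemma ms_climb (m : ℕ) : ∀ q : ℕ, q % 2 = 1 →
    Relation.ReflTransGen MSStep (2 ^ m * q - 1) (3 ^ m * q - 1) := by
  induction m with
  | zero => intro q hq; simp; exact Relation.ReflTransGen.refl
  | succ n ih =>
    intro q hq
    have hdbl : 2 ^ (n+1) * q = 2 * (2 ^ n * q) := by ring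
    have h3 : (3:ℕ) ^ (n+1) * q = 3 ^ n * (3 * q) := by ring
    have hp : 1 ≤ 2 ^ n := Nat.one_le_two_pow
    have hq1 : 1 ≤ q := by omega
    have hx : 1 ≤ 2 ^ n * q := Nat.one_le_iff_ne_zero.2 (by positivity)
    -- first step: x odd, go to 3x+1
    have step1 : MSStep (2 ^ (n+1) * q - 1) (3 * (2 ^ (n+1) * q - 1) + 1) := by
      constructor
      · omega
      · left; constructor
        · omega
        · rfl
    -- 3*(2^(n+1)q - 1)+1 = 2*(3*2^n*q - 1), even, halve
    have heq : 3 * (2 ^ (n+1) * q - 1) + 1 = 2 * (2 ^ n * (3 * q) - 1) := by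
      have : 2 ^ (n+1) * q = 2 * (2 ^ n * q) := by ring
      have h4 : 2 ^ n * (3 * q) = 3 * (2 ^ n * q) := by ring
      omega
    have step2 : MSStep (3 * (2 ^ (n+1) * q - 1) + 1) (2 ^ n * (3 * q) - 1) := by
      constructor
      · omega
      · right; left; constructor
        · omega
        · omega
    have htail := ih (3 * q) (by omega)
    rw [h3]
    exact Relation.ReflTransGen.head step1 (Relation.ReflTransGen.head step2 htail)

private lemma ms_descend (k : ℕ) : ∀ q : ℕ, q % 2 = 1 →
    Relation.ReflTransGen MSStep ((3 ^ (k+1) * q - 1) / 2) ((3 * q - 1) / 2) := by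
  induction k with
  | zero => intro q hq; exact Relation.ReflTransGen.refl
  | succ n ih =>
    intro q hq
    have htail := ih q hq
    have hq1 : 1 ≤ q := by omega
    have hs3 : 3 ≤ 3 ^ (n+1) := by
      calc (3:ℕ) = 3 ^ 1 := by norm_num
      _ ≤ 3 ^ (n+1) := Nat.pow_le_pow_right (by norm_num) (by omega)
    have hsodd : (3 ^ (n+1) * q) % 2 = 1 := by
      have : Odd ((3:ℕ) ^ (n+1) * q) :=
        Odd.mul (Odd.pow (⟨1, by norm_num⟩ : Odd (3:ℕ))) (Nat.odd_iff.2 hq)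
      exact Nat.odd_iff.1 this
    have hs1 : 3 ≤ 3 ^ (n+1) * q := le_trans hs3 (Nat.le_mul_of_pos_right _ (by omega))
    obtain ⟨u, hu⟩ : ∃ u, 3 ^ (n+1) * q = 2 * u + 1 := ⟨(3 ^ (n+1) * q) / 2, by omega⟩
    have hbig : 3 ^ (n+2) * q = 3 * (3 ^ (n+1) * q) := by ring
    -- x = (3^(n+2)q - 1)/2 = 3u+1, y = (3^(n+1)q - 1)/2 = u
    have hx : (3 ^ (n+2) * q - 1) / 2 = 3 * u + 1 := by omega
    have hy : (3 ^ (n+1) * q - 1) / 2 = u := by omega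
    have step : MSStep ((3 ^ (n+2) * q - 1) / 2) ((3 ^ (n+1) * q - 1) / 2) := by
      rw [hx, hy]
      refine ⟨by omega, Or.inr (Or.inr ⟨by omega, by omega, by omega⟩)⟩
    exact Relation.ReflTransGen.head step htail

theorem ms_descending (A : ℕ) (hA : 1 < A) :
    ∃ C : ℕ, Relation.ReflTransGen MSStep A C ∧ 0 < C ∧ C < A := by
  rcases Nat.even_or_odd A with he | ho
  · -- even case
    refine ⟨A / 2, Relation.ReflTransGen.single ⟨by omega, Or.inr (Or.inl ⟨Nat.even_iff.1 he, rfl⟩)⟩, by omega, by omega⟩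
  · -- odd case
    have hA2 : A % 2 = 1 := Nat.odd_iff.1 ho
    obtain ⟨m, q, hqodd, hAq⟩ := Nat.exists_eq_two_pow_mul_odd (n := A + 1) (by omega)
    have hq2 : q % 2 = 1 := Nat.odd_iff.1 hqodd
    have hq1 : 1 ≤ q := by omega
    have hm : 1 ≤ m := by
      rcases Nat.eq_zero_or_pos m with h | h
      · subst h; simp at hAq; omega
      · exact h
    have h2m : 2 ≤ 2 ^ m := by
      calc (2:ℕ) = 2 ^ 1 := by norm_num
      _ ≤ 2 ^ m := Nat.pow_le_pow_right (by norm_num) hm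
    have h3m : 3 ≤ 3 ^ m := by
      calc (3:ℕ) = 3 ^ 1 := by norm_num
      _ ≤ 3 ^ m := Nat.pow_le_pow_right (by norm_num) hm
    have hA' : A = 2 ^ m * q - 1 := by omega
    have hsodd : (3 ^ m * q) % 2 = 1 :=
      Nat.odd_iff.1 (Odd.mul (Odd.pow (⟨1, by norm_num⟩ : Odd (3:ℕ))) hqodd)
    have hs3 : 3 ≤ 3 ^ m * q := le_trans h3m (Nat.le_mul_of_pos_right _ (by omega))
    -- climb
    have p1 : Relation.ReflTransGen MSStep A (3 ^ m * q - 1) := hA' ▸ ms_climb m q hq2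
    -- halve once
    have step : MSStep (3 ^ m * q - 1) ((3 ^ m * q - 1) / 2) := by
      refine ⟨by omega, Or.inr (Or.inl ⟨by omega, rfl⟩)⟩
    -- descend
    have hm' : m = (m - 1) + 1 := by omega
    have p2 : Relation.ReflTransGen MSStep ((3 ^ m * q - 1) / 2) ((3 * q - 1) / 2) := by
      rw [hm']; exact ms_descend (m - 1) q hq2
    refine ⟨(3 * q - 1) / 2, (p1.tail step).trans p2, by omega, ?_⟩
    -- (3q-1)/2 < A = 2^m q - 1
    rcases Nat.lt_or_ge m 2 with h | h
    · -- m = 1, so q ≥ 3 since A > 1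
      have hm1 : m = 1 := by omega
      subst hm1
      simp only [pow_one] at hA'
      omega
    · have h4 : 4 ≤ 2 ^ m := by
        calc (4:ℕ) = 2 ^ 2 := by norm_num
        _ ≤ 2 ^ m := Nat.pow_le_pow_right (by norm_num) h
      have : 8 * q ≤ 2 ^ m * (2 * q) := by
        calc 8 * q = 4 * (2 * q) := by ring
        _ ≤ 2 ^ m * (2 * q) := Nat.mul_le_mul_right _ h4
      have h2q : 2 ^ m * (2 * q) = 2 * (2 ^ m * q) := by ring
      omega
end

section
/- In the model MS (moves: x ↦ 3x+1 if x odd; x ↦ x/2 if x even; x ↦ (x-1)/3 if x ≡ 1 mod 3 and x > 1), every positive integer A can be transformed to 1 by a finite sequence of allowed moves. -/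
lemma msstep_odd (x : ℕ) (h : x % 2 = 1) : MSStep x (3 * x + 1) :=
  ⟨by omega, Or.inl ⟨h, rfl⟩⟩

lemma msstep_half (m : ℕ) (hm : 0 < m) : MSStep (2 * m) m :=
  ⟨by omega, Or.inr (Or.inl ⟨by omega, by omega⟩)⟩

lemma msstep_shortcut (m : ℕ) (hm : 0 < m) : MSStep (3 * m + 1) m :=
  ⟨by omega, Or.inr (Or.inr ⟨by omega, by omega, by omega⟩)⟩

/-- `W c k = (3^k * (2c+1) - 1) / 2`. -/
def W (c : ℕ) : ℕ → ℕ
  | 0 => c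
  | k + 1 => 3 * W c k + 1

lemma W_succ (c k : ℕ) : W c (k + 1) = 3 * W c k + 1 := rfl

lemma W_spec (c k : ℕ) : 2 * W c k + 1 = 3 ^ k * (2 * c + 1) := by
  induction k with
  | zero => simp [W]
  | succ k ih =>
    rw [W_succ, show (3:ℕ) ^ (k+1) * (2*c+1) = 3 * (3 ^ k * (2*c+1)) by ring]
    omega

lemma descend (c k : ℕ) :
    Relation.ReflTransGen MSStep (W c (k + 1)) (W c 1) := by
  induction k with
  | zero => exact .refl
  | succ k ih =>
    have h : MSStep (W c (k + 2)) (W c (k + 1)) := by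
      rw [W_succ c (k + 1)]
      exact msstep_shortcut _ (by rw [W_succ]; omega)
    exact Relation.ReflTransGen.head h ih

lemma climb (a : ℕ) : ∀ b, b % 2 = 1 →
    Relation.ReflTransGen MSStep (2 ^ a * b - 1) (3 ^ a * b - 1) := by
  induction a with
  | zero => intro b hb; simpa using Relation.ReflTransGen.refl
  | succ a ih =>
    intro b hb
    have h1 : 0 < 2 ^ a * b := Nat.mul_pos (pow_pos (by norm_num) a) (by omega)
    have hx : 2 ^ (a + 1) * b = 2 * (2 ^ a * b) := by ring
    rw [hx]
    have hq : 2 ^ a * (3 * b) = 3 * (2 ^ a * b) := by ring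
    refine Relation.ReflTransGen.head (msstep_odd _ (by omega)) ?_
    have he : 3 * (2 * (2 ^ a * b) - 1) + 1 = 2 * (2 ^ a * (3 * b) - 1) := by omega
    rw [he]
    refine Relation.ReflTransGen.head (msstep_half _ (by omega)) ?_
    have h3 : 3 ^ a * (3 * b) = 3 ^ (a + 1) * b := by ring
    rw [← h3]
    exact ih (3 * b) (by omega)

theorem ms_reaches_one (A : ℕ) (hA : 0 < A) :
    Relation.ReflTransGen MSStep A 1 := by
  induction A using Nat.strong_induction_on with
  | _ A ih =>
    rcases eq_or_lt_of_le (show 1 ≤ A from hA) with h1 | h1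
    · exact h1 ▸ Relation.ReflTransGen.refl
    · rcases Nat.even_or_odd A with he | ho
      · obtain ⟨m, hm⟩ := he
        have hm' : A = 2 * m := by omega
        subst hm'
        exact Relation.ReflTransGen.head (msstep_half m (by omega))
          (ih m (by omega) (by omega))
      · -- A odd, A > 1
        obtain ⟨a, b, hb, hAb⟩ :=
          Nat.exists_eq_pow_mul_and_not_dvd (n := A + 1) (by omega) 2 (by norm_num)
        have hbodd : b % 2 = 1 := by omega
        obtain ⟨c, hc⟩ : ∃ c, b = 2 * c + 1 := ⟨b / 2, by omega⟩
        have ha : a ≠ 0 := by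
          rintro rfl
          simp at hAb
          obtain ⟨k, hk⟩ := ho
          omega
        obtain ⟨a', rfl⟩ : ∃ a', a = a' + 1 := ⟨a - 1, by omega⟩
        have hA2 : A = 2 ^ (a' + 1) * b - 1 := by omega
        have hW := W_spec c (a' + 1)
        have h3b : 3 ^ (a' + 1) * b - 1 = 2 * W c (a' + 1) := by rw [hc]; omega
        have hWpos : 0 < W c (a' + 1) := by
          obtain ⟨t, ht, ht3⟩ : ∃ t, 3 ^ (a' + 1) * (2 * c + 1) = t ∧ 3 ≤ t :=
            ⟨_, rfl, le_trans (Nat.le_self_pow (by omega) 3)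
              (Nat.le_mul_of_pos_right _ (by omega))⟩
          rw [ht] at hW
          omega
        have step1 : Relation.ReflTransGen MSStep A (W c (a' + 1)) := by
          rw [hA2]
          refine (climb (a' + 1) b hbodd).trans ?_
          rw [h3b]
          exact Relation.ReflTransGen.single (msstep_half _ hWpos)
        have step2 := descend c a'
        have hW1 : W c 1 = 3 * c + 1 := rfl
        have hsmall : 3 * c + 1 < A := by
          have h2a : 2 ≤ 2 ^ (a' + 1) := by
            have := Nat.one_le_two_pow (n := a')
            rw [pow_succ]; omega
          have hge : 2 * b ≤ A + 1 := by
            rw [hAb]; exact Nat.mul_le_mul_right b h2a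
          omega
        refine (step1.trans step2).trans ?_
        rw [hW1]
        exact ih (3 * c + 1) hsmall (by omega)
end

section
/- In the model MS, for every positive integer A with A ≡ 2 (mod 3) there exists a finite sequence of allowed MS-moves transforming A into a strictly smaller positive integer. (Concretely: if A is even one may apply x/2 then (x-1)/3; if A is odd one applies 3x+1 then x/2 repeatedly until reaching an even intermediate quotient, then divides down and strips trailing applications of (x-1)/3.) -/
lemma ms_pow3_odd (k : ℕ) : 3 ^ k % 2 = 1 := by
  rw [Nat.pow_mod]; simp

lemma ms_reach_up : ∀ k q : ℕ, q % 2 = 1 →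
    Relation.ReflTransGen MSStep (2^k * q - 1) (3^k * q - 1) := by
  intro k
  induction k with
  | zero => intro q hq; simp only [pow_zero, one_mul]; exact Relation.ReflTransGen.refl
  | succ k ih =>
    intro q hq
    have hq1 : 1 ≤ q := by omega
    have hm1 : 1 ≤ 2^k * q := Nat.mul_pos (Nat.pow_pos (by norm_num : 0 < 2)) (by omega)
    have hpe : 2^(k+1) * q = 2 * (2^k * q) := by ring
    have hpe3 : 2^k * (3 * q) = 3 * (2^k * q) := by ring
    have h1 : MSStep (2^(k+1)*q - 1) (3*(2^(k+1)*q - 1)+1) := by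
      rw [hpe]
      exact ⟨by omega, Or.inl ⟨by omega, rfl⟩⟩
    have h2 : MSStep (3*(2^(k+1)*q - 1)+1) (2^k*(3*q) - 1) := by
      rw [hpe, hpe3]
      exact ⟨by omega, Or.inr (Or.inl ⟨by omega, by omega⟩)⟩
    have h3 := ih (3*q) (by omega)
    have he : 3^(k+1) * q = 3^k * (3*q) := by ring
    rw [he]
    exact ((Relation.ReflTransGen.single h1).tail h2).trans h3

lemma ms_reach_down : ∀ k q : ℕ, q % 2 = 1 →
    Relation.ReflTransGen MSStep ((3^(k+1)*q - 1)/2) ((3*q - 1)/2) := by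
  intro k
  induction k with
  | zero => intro q hq; rw [pow_one]
  | succ k ih =>
    intro q hq
    have ht3 : 3 ≤ 3^(k+1) * q := by
      calc (3:ℕ) = 3 * 1 := by norm_num
      _ ≤ 3^(k+1) * q := Nat.mul_le_mul
        (by calc (3:ℕ) = 3^1 := (pow_one 3).symm
            _ ≤ 3^(k+1) := Nat.pow_le_pow_right (by norm_num) (by omega)) (by omega)
    have hto : (3^(k+1) * q) % 2 = 1 := by
      rw [Nat.mul_mod, ms_pow3_odd, hq]
    have hee : 3^(k+2) * q = 3 * (3^(k+1) * q) := by ring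
    have hstep : MSStep ((3^(k+2)*q - 1)/2) ((3^(k+1)*q - 1)/2) := by
      rw [hee]
      generalize 3^(k+1) * q = t at ht3 hto
      exact ⟨by omega, Or.inr (Or.inr ⟨by omega, by omega, by omega⟩)⟩
    exact (Relation.ReflTransGen.single hstep).trans (ih q hq)

theorem ms_descending_mod3_eq_2 (A : ℕ) (hA : 0 < A) (h : A % 3 = 2) :
    ∃ C : ℕ, Relation.ReflTransGen MSStep A C ∧ 0 < C ∧ C < A := by
  have hA2 : 2 ≤ A := by omega
  rcases Nat.even_or_odd A with he | ho
  · have he2 : A % 2 = 0 := Nat.even_iff.mp he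
    exact ⟨A/2, Relation.ReflTransGen.single ⟨hA, Or.inr (Or.inl ⟨he2, rfl⟩)⟩,
      by omega, by omega⟩
  · have ho2 : A % 2 = 1 := Nat.odd_iff.mp ho
    have hA5 : 5 ≤ A := by omega
    obtain ⟨k, q, hq2, hAq⟩ := Nat.exists_eq_pow_mul_and_not_dvd
      (show A + 1 ≠ 0 by omega) 2 (by norm_num)
    have hqo : q % 2 = 1 := by omega
    have hq1 : 1 ≤ q := by omega
    have hk : k ≠ 0 := by
      rintro rfl
      simp at hAq
      omega
    obtain ⟨k', rfl⟩ : ∃ k', k = k' + 1 := ⟨k - 1, by omega⟩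
    have hm2 : 2 * q ≤ 2^(k'+1) * q := Nat.mul_le_mul_right q
      (by calc (2:ℕ) = 2^1 := (pow_one 2).symm
          _ ≤ 2^(k'+1) := Nat.pow_le_pow_right (by norm_num) (by omega))
    have hA' : A = 2^(k'+1) * q - 1 := by omega
    have h1 : Relation.ReflTransGen MSStep A (3^(k'+1) * q - 1) := by
      rw [hA']; exact ms_reach_up (k'+1) q hqo
    have ht3 : 3 ≤ 3^(k'+1) * q := by
      calc (3:ℕ) = 3 * 1 := by norm_num
      _ ≤ 3^(k'+1) * q := Nat.mul_le_mul
        (by calc (3:ℕ) = 3^1 := (pow_one 3).symm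
            _ ≤ 3^(k'+1) := Nat.pow_le_pow_right (by norm_num) (by omega)) (by omega)
    have hto : (3^(k'+1) * q) % 2 = 1 := by
      rw [Nat.mul_mod, ms_pow3_odd, hqo]
    have h2 : MSStep (3^(k'+1)*q - 1) ((3^(k'+1)*q - 1)/2) := by
      generalize 3^(k'+1) * q = t at ht3 hto
      exact ⟨by omega, Or.inr (Or.inl ⟨by omega, rfl⟩)⟩
    have h3 := ms_reach_down k' q hqo
    have hreach : Relation.ReflTransGen MSStep A ((3*q - 1)/2) :=
      (h1.tail h2).trans h3
    refine ⟨(3*q - 1)/2, hreach, by omega, ?_⟩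
    rcases eq_or_lt_of_le hq1 with hq | hq
    · omega
    · omega
end

section
/- In the model M1 (moves x ↦ 3x+1; x ↦ 2x; x ↦ x/2 if 2 ∣ x; x ↦ (x-1)/3 if x ≡ 1 mod 3 with positive result), every positive integer A is reachable from 4 and 4 is reachable from A; in particular the reachability relation of M1 restricted to positive integers has a single equivalence class under mutual reachability. -/
lemma m1_symm : Symmetric M1Step := by
  rintro x y ⟨hx, h | h | ⟨he, h⟩ | ⟨h3, h1, h⟩⟩ <;> subst h
  · exact ⟨by omega, Or.inr (Or.inr (Or.inr ⟨by omega, by omega, by omega⟩))⟩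
  · exact ⟨by omega, Or.inr (Or.inr (Or.inl ⟨by omega, by omega⟩))⟩
  · exact ⟨by omega, Or.inr (Or.inl (by omega))⟩
  · exact ⟨by omega, Or.inl (by omega)⟩

lemma m1_reach4 : ∀ A : ℕ, 0 < A → Relation.ReflTransGen M1Step A 4 := by
  intro A
  induction A using Nat.strong_induction_on with
  | _ A ih =>
  intro hA
  rcases eq_or_ne A 4 with rfl | h4
  · exact .refl
  rcases eq_or_ne A 1 with rfl | h1
  · exact .head (show M1Step 1 2 from ⟨by norm_num, Or.inr (Or.inl (by norm_num))⟩)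
      (.single (show M1Step 2 4 from ⟨by norm_num, Or.inr (Or.inl (by norm_num))⟩))
  rcases Nat.even_or_odd A with he | ho
  · have h2 : A % 2 = 0 := Nat.even_iff.mp he
    exact .head ⟨hA, Or.inr (Or.inr (Or.inl ⟨h2, rfl⟩))⟩ (ih (A / 2) (by omega) (by omega))
  have hodd : A % 2 = 1 := Nat.odd_iff.mp ho
  rcases Nat.lt_or_ge (A % 4) 2 with h41 | h43
  · -- A % 4 = 1, A ≥ 5 : A → 3A+1 → (3A+1)/2 → (3A+1)/4 < A
    have h41 : A % 4 = 1 := by omega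
    have s1 : M1Step A (3 * A + 1) := ⟨hA, Or.inl rfl⟩
    have s2 : M1Step (3 * A + 1) ((3 * A + 1) / 2) :=
      ⟨by omega, Or.inr (Or.inr (Or.inl ⟨by omega, rfl⟩))⟩
    have s3 : M1Step ((3 * A + 1) / 2) ((3 * A + 1) / 2 / 2) :=
      ⟨by omega, Or.inr (Or.inr (Or.inl ⟨by omega, rfl⟩))⟩
    exact .head s1 (.head s2 (.head s3 (ih ((3 * A + 1) / 2 / 2) (by omega) (by omega))))
  · -- A % 4 = 3 : A → 2A → 4A → 12A+1 → 36A+4 → 18A+2 → 9A+1 → (9A+1)/2 → (9A+1)/4 → (3A-1)/4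
    have h43 : A % 4 = 3 := by omega
    have t1 : M1Step A (2 * A) := ⟨hA, Or.inr (Or.inl rfl)⟩
    have t2 : M1Step (2 * A) (4 * A) := ⟨by omega, Or.inr (Or.inl (by ring))⟩
    have t3 : M1Step (4 * A) (12 * A + 1) := ⟨by omega, Or.inl (by ring)⟩
    have t4 : M1Step (12 * A + 1) (36 * A + 4) := ⟨by omega, Or.inl (by ring)⟩
    have t5 : M1Step (36 * A + 4) (18 * A + 2) :=
      ⟨by omega, Or.inr (Or.inr (Or.inl ⟨by omega, by omega⟩))⟩
    have t6 : M1Step (18 * A + 2) (9 * A + 1) :=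
      ⟨by omega, Or.inr (Or.inr (Or.inl ⟨by omega, by omega⟩))⟩
    have t7 : M1Step (9 * A + 1) ((9 * A + 1) / 2) :=
      ⟨by omega, Or.inr (Or.inr (Or.inl ⟨by omega, rfl⟩))⟩
    have t8 : M1Step ((9 * A + 1) / 2) ((9 * A + 1) / 2 / 2) :=
      ⟨by omega, Or.inr (Or.inr (Or.inl ⟨by omega, rfl⟩))⟩
    have t9 : M1Step ((9 * A + 1) / 2 / 2) (((9 * A + 1) / 2 / 2 - 1) / 3) :=
      ⟨by omega, Or.inr (Or.inr (Or.inr ⟨by omega, by omega, rfl⟩))⟩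
    exact .head t1 (.head t2 (.head t3 (.head t4 (.head t5 (.head t6 (.head t7 (.head t8
      (.head t9 (ih (((9 * A + 1) / 2 / 2 - 1) / 3) (by omega) (by omega))))))))))

theorem m1_single_class (A : ℕ) (hA : 0 < A) :
    Relation.ReflTransGen M1Step 4 A ∧ Relation.ReflTransGen M1Step A 4 := by
  have h := m1_reach4 A hA
  exact ⟨(@Relation.ReflTransGen.symmetric _ _ ⟨m1_symm⟩).symm _ _ h, h⟩
end
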